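/- In the latent-variable model of Straub and Der Kiureghian with J substations, observed intensities â₁,…,â_J ∈ (0,∞), failure indicators z_{ij} ∈ {0,1}, noise variance σ_ε² > 0, parameter θ = (α,β,ρ) with α,β > 0, ρ ∈ (0,1), prior hyperparameters μ ∈ ℝ, σ > 0, and prior π_SK(θ) = (βα)^{-1}·exp(-(log α − μ)²/(2σ²))·1_{0≤ρ≤1}, the unnormalized posterior p(θ|z,â) = ℓ_J(z|â,θ)·π_SK(θ) satisfies, for fixed α and ρ: there exists a constant C > 0 such that p((α,β,ρ)|z,â) ~ C/β as β → ∞. Consequently ∫_1^∞ p((α,β,ρ)|z,â) dβ = +∞, so the posterior is improper. -/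

import Mathlib

open MeasureTheory Real Filter Set

/-- The standard Gaussian cumulative distribution function. -/
noncomputable def Phi (x : ℝ) : ℝ :=
  (Real.sqrt (2 * Real.pi))⁻¹ * ∫ t in Set.Iic x, Real.exp (-t ^ 2 / 2)

/-- `Ψ^z(γ) = Φ(γ)^z (1-Φ(γ))^{1-z}` for `z ∈ {0,1}`. -/
noncomputable def Psi (z : ℕ) (γ : ℝ) : ℝ := Phi γ ^ z * (1 - Phi γ) ^ (1 - z)

/-- The likelihood in the latent-variable model of Straub and Der Kiureghian:
`ℓ_J(z|â,θ) = ∏_j ∫_ℝ ∏_i Ψ^{z_{ij}}((x − log α)/(β√(1−ρ))) ·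
(2π(σ_ε² + ρβ²))^{-1/2} exp(-(x − log â_j)²/(2(σ_ε² + ρβ²))) dx`. -/
noncomputable def likSK (J : ℕ) (I : Fin J → ℕ) (ahat : Fin J → ℝ)
    (z : (j : Fin J) → Fin (I j) → ℕ) (σε α β ρ : ℝ) : ℝ :=
  ∏ j, ∫ x : ℝ,
    (∏ i, Psi (z j i) ((x - Real.log α) / (β * Real.sqrt (1 - ρ)))) *
      ((Real.sqrt (2 * Real.pi * (σε ^ 2 + ρ * β ^ 2)))⁻¹ *
        Real.exp (-(x - Real.log (ahat j)) ^ 2 / (2 * (σε ^ 2 + ρ * β ^ 2))))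

/-- The prior of Straub and Der Kiureghian on `θ = (α,β,ρ)`:
`π_SK(θ) = (βα)⁻¹ exp(-(log α − μ)²/(2σ²))·1_{0≤ρ≤1}`. -/
noncomputable def piSK3 (μ σ α β ρ : ℝ) : ℝ :=
  (β * α)⁻¹ * Real.exp (-(Real.log α - μ) ^ 2 / (2 * σ ^ 2)) *
    (if 0 ≤ ρ ∧ ρ ≤ 1 then 1 else 0)

/-- The unnormalized posterior `p(θ|z,â) = ℓ_J(z|â,θ)·π_SK(θ)` in the latent-variable
model of Straub and Der Kiureghian. -/
noncomputable def postSK (J : ℕ) (I : Fin J → ℕ) (ahat : Fin J → ℝ)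
    (z : (j : Fin J) → Fin (I j) → ℕ) (σε μ σ α β ρ : ℝ) : ℝ :=
  likSK J I ahat z σε α β ρ * piSK3 μ σ α β ρ


open Topology

lemma gauss_eq : (fun t : ℝ => Real.exp (-t ^ 2 / 2)) = fun t => Real.exp (-(1/2) * t ^ 2) := by
  funext t; congr 1; ring

lemma gauss_integrable : Integrable (fun t : ℝ => Real.exp (-t ^ 2 / 2)) := by
  rw [gauss_eq]; exact integrable_exp_neg_mul_sq (by norm_num)

lemma gauss_total : (∫ t : ℝ, Real.exp (-t ^ 2 / 2)) = Real.sqrt (2 * Real.pi) := by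
  rw [gauss_eq, integral_gaussian]
  rw [div_div_eq_mul_div, div_one]  -- π / (1/2) = 2π ?  fix later
  ring_nf

lemma sqrt2pi_pos : 0 < Real.sqrt (2 * Real.pi) :=
  Real.sqrt_pos.mpr (by positivity)

lemma Iic_integral_pos (x : ℝ) : 0 < ∫ t in Set.Iic x, Real.exp (-t ^ 2 / 2) := by
  rw [setIntegral_pos_iff_support_of_nonneg_ae]
  · have : (Function.support fun t : ℝ => Real.exp (-t ^ 2 / 2)) = Set.univ := by
      ext t; simp [Real.exp_ne_zero]
    rw [this]
    simp [Real.volume_Iic]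
  · filter_upwards with t using (Real.exp_pos _).le
  · exact gauss_integrable.integrableOn

lemma Ioi_integral_pos (x : ℝ) : 0 < ∫ t in Set.Ioi x, Real.exp (-t ^ 2 / 2) := by
  rw [setIntegral_pos_iff_support_of_nonneg_ae]
  · have : (Function.support fun t : ℝ => Real.exp (-t ^ 2 / 2)) = Set.univ := by
      ext t; simp [Real.exp_ne_zero]
    rw [this]
    simp [Real.volume_Ioi]
  · filter_upwards with t using (Real.exp_pos _).le
  · exact gauss_integrable.integrableOn

lemma Phi_pos (x : ℝ) : 0 < Phi x :=
  mul_pos (inv_pos.mpr sqrt2pi_pos) (Iic_integral_pos x)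

lemma Phi_lt_one (x : ℝ) : Phi x < 1 := by
  have hsplit : (∫ t in Set.Iic x, Real.exp (-t ^ 2 / 2)) + ∫ t in Set.Ioi x, Real.exp (-t ^ 2 / 2)
      = Real.sqrt (2 * Real.pi) := by
    rw [← gauss_total]
    exact intervalIntegral.integral_Iic_add_Ioi gauss_integrable.integrableOn gauss_integrable.integrableOn
  have h := Ioi_integral_pos x
  rw [Phi]
  rw [inv_mul_lt_one₀ sqrt2pi_pos]  -- maybe wrong name
  linarith

lemma continuous_Phi : Continuous Phi := by
  have h : ∀ a b : ℝ, IntervalIntegrable (fun t => Real.exp (-t ^ 2 / 2)) volume a b :=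
    fun a b => gauss_integrable.intervalIntegrable
  have hc := intervalIntegral.continuous_primitive h 0
  have : Phi = fun x => (Real.sqrt (2 * Real.pi))⁻¹ *
      ((∫ t in Set.Iic 0, Real.exp (-t ^ 2 / 2)) + ∫ t in (0:ℝ)..x, Real.exp (-t ^ 2 / 2)) := by
    funext x
    have h2 := intervalIntegral.integral_Iic_sub_Iic (a := 0) (b := x)
      (μ := volume) (f := fun t => Real.exp (-t ^ 2 / 2))
      gauss_integrable.integrableOn gauss_integrable.integrableOn
    rw [Phi, ← h2]
    ring
  rw [this]
  exact continuous_const.mul (continuous_const.add hc)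

lemma Psi_pos {z : ℕ} (hz : z = 0 ∨ z = 1) (γ : ℝ) : 0 < Psi z γ := by
  rcases hz with h | h <;> subst h <;> simp [Psi] <;>
    [skip; exact Phi_pos γ]
  linarith [Phi_lt_one γ]

lemma Psi_le_one {z : ℕ} (hz : z = 0 ∨ z = 1) (γ : ℝ) : Psi z γ ≤ 1 := by
  rcases hz with h | h <;> subst h <;> simp [Psi] <;>
    [linarith [Phi_pos γ]; linarith [Phi_lt_one γ]]

lemma continuous_Psi (z : ℕ) : Continuous (Psi z) := by
  unfold Psi
  exact (continuous_Phi.pow z).mul ((continuous_const.sub continuous_Phi).pow (1 - z))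

/-- substitution lemma -/
lemma sub_lemma (σε ρ lα m : ℝ) (β : ℝ) (hs2 : 0 < σε ^ 2 + ρ * β ^ 2) (f : ℝ → ℝ) :
    (∫ x : ℝ, f ((x - lα) / (β * Real.sqrt (1 - ρ))) *
      ((Real.sqrt (2 * Real.pi * (σε ^ 2 + ρ * β ^ 2)))⁻¹ *
        Real.exp (-(x - m) ^ 2 / (2 * (σε ^ 2 + ρ * β ^ 2))))) =
    ∫ y : ℝ, f ((Real.sqrt (σε ^ 2 + ρ * β ^ 2) * y + m - lα) / (β * Real.sqrt (1 - ρ))) *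
      ((Real.sqrt (2 * Real.pi))⁻¹ * Real.exp (-y ^ 2 / 2)) := by
  set s := Real.sqrt (σε ^ 2 + ρ * β ^ 2) with hsdef
  have hs : 0 < s := Real.sqrt_pos.mpr hs2
  have hss : s ^ 2 = σε ^ 2 + ρ * β ^ 2 := Real.sq_sqrt hs2.le
  set G : ℝ → ℝ := fun x => f ((x - lα) / (β * Real.sqrt (1 - ρ))) *
      ((Real.sqrt (2 * Real.pi * (σε ^ 2 + ρ * β ^ 2)))⁻¹ *
        Real.exp (-(x - m) ^ 2 / (2 * (σε ^ 2 + ρ * β ^ 2)))) with hG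
  have h1 : (∫ x, G x) = ∫ x, G (x + m) := (integral_add_right_eq_self G m).symm
  have h2 : (∫ y, G (s * y + m)) = |s⁻¹| • ∫ x, G (x + m) :=
    Measure.integral_comp_mul_left (fun x => G (x + m)) s
  have hpt : ∀ y : ℝ,
      f ((s * y + m - lα) / (β * Real.sqrt (1 - ρ))) *
        ((Real.sqrt (2 * Real.pi))⁻¹ * Real.exp (-y ^ 2 / 2)) = s * G (s * y + m) := by
    intro y
    have hsqrt : Real.sqrt (2 * Real.pi * (σε ^ 2 + ρ * β ^ 2)) = Real.sqrt (2 * Real.pi) * s := by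
      rw [← hss, ← Real.sqrt_sq hs.le, ← Real.sqrt_mul (by positivity)]
      rw [Real.sqrt_sq hs.le]
    have hexp : -(s * y + m - m) ^ 2 / (2 * (σε ^ 2 + ρ * β ^ 2)) = -y ^ 2 / 2 := by
      rw [← hss]
      field_simp
      ring
    rw [hG]
    simp only []
    rw [hsqrt, hexp, mul_inv]
    have h2pi : (Real.sqrt (2 * Real.pi)) ≠ 0 := by positivity
    field_simp
  calc (∫ x : ℝ, G x) = ∫ x, G (x + m) := h1
    _ = s * ∫ y, G (s * y + m) := by
        rw [h2, abs_of_pos (inv_pos.mpr hs), smul_eq_mul, ← mul_assoc,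
          mul_inv_cancel₀ hs.ne', one_mul]
    _ = ∫ y, s * G (s * y + m) := (MeasureTheory.integral_const_mul s _).symm
    _ = _ := by
        congr 1
        funext y
        exact (hpt y).symm


set_option maxHeartbeats 1000000 in
lemma tendsto_Fj (n : ℕ) (zz : Fin n → ℕ) (hzz : ∀ i, zz i = 0 ∨ zz i = 1)
    (σε : ℝ) (hσε : 0 < σε) (α : ℝ) (ρ : ℝ) (hρ0 : 0 < ρ) (hρ1 : ρ < 1) (m : ℝ) :
    ∃ L > (0:ℝ), Tendsto (fun β : ℝ => ∫ x : ℝ,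
      (∏ i, Psi (zz i) ((x - Real.log α) / (β * Real.sqrt (1 - ρ)))) *
        ((Real.sqrt (2 * Real.pi * (σε ^ 2 + ρ * β ^ 2)))⁻¹ *
          Real.exp (-(x - m) ^ 2 / (2 * (σε ^ 2 + ρ * β ^ 2))))) atTop (𝓝 L) := by
  have hb : 0 < Real.sqrt (1 - ρ) := Real.sqrt_pos.mpr (by linarith)
  set b := Real.sqrt (1 - ρ) with hbdef
  set c : ℝ := Real.sqrt ρ / b with hcdef
  set φ : ℝ → ℝ := fun y => (Real.sqrt (2 * Real.pi))⁻¹ * Real.exp (-y ^ 2 / 2) with hφdef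
  have hφ_pos : ∀ y, 0 < φ y := fun y => by positivity
  have hφ_int : Integrable φ := gauss_integrable.const_mul _
  set Q : ℝ → ℝ := fun y => ∏ i, Psi (zz i) (c * y) with hQdef
  have hQ_pos : ∀ y, 0 < Q y := fun y => Finset.prod_pos fun i _ => Psi_pos (hzz i) _
  have hQ_le : ∀ y, Q y ≤ 1 := fun y =>
    Finset.prod_le_one (fun i _ => (Psi_pos (hzz i) _).le) (fun i _ => Psi_le_one (hzz i) _)
  have hQφ_int : Integrable (fun y => Q y * φ y) := by
    refine hφ_int.mono ?_ ?_
    · refine Continuous.aestronglyMeasurable ?_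
      refine Continuous.mul ?_ (by fun_prop)
      exact continuous_finset_prod _ fun i _ => (continuous_Psi _).comp (by fun_prop)
    · filter_upwards with y
      rw [Real.norm_eq_abs, Real.norm_eq_abs, abs_of_pos (hφ_pos y),
        abs_of_pos (mul_pos (hQ_pos y) (hφ_pos y))]
      nlinarith [hQ_pos y, hQ_le y, hφ_pos y]
  set L : ℝ := ∫ y, Q y * φ y with hLdef
  have hL_pos : 0 < L := by
    rw [hLdef, integral_pos_iff_support_of_nonneg
      (fun y => (mul_pos (hQ_pos y) (hφ_pos y)).le) hQφ_int]
    have : (Function.support fun y => Q y * φ y) = Set.univ := by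
      ext y; simp only [Function.mem_support, Set.mem_univ, iff_true]
      exact (mul_pos (hQ_pos y) (hφ_pos y)).ne'
    rw [this]; simp
  refine ⟨L, hL_pos, ?_⟩
  -- intermediate: tendsto of the substituted integrals
  have key : Tendsto (fun β : ℝ => ∫ y : ℝ,
      (∏ i, Psi (zz i) ((Real.sqrt (σε ^ 2 + ρ * β ^ 2) * y + m - Real.log α) / (β * b))) * φ y)
      atTop (𝓝 L) := by
    refine tendsto_integral_filter_of_dominated_convergence φ ?_ ?_ hφ_int ?_
    · filter_upwards with β
      refine Continuous.aestronglyMeasurable (Continuous.mul ?_ (by fun_prop))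
      exact continuous_finset_prod _ fun i _ => (continuous_Psi _).comp (by fun_prop)
    · filter_upwards with β
      filter_upwards with y
      rw [Real.norm_eq_abs, abs_of_nonneg (mul_nonneg
        (Finset.prod_nonneg fun i _ => (Psi_pos (hzz i) _).le) (hφ_pos y).le)]
      have h1 : (∏ i, Psi (zz i) ((Real.sqrt (σε ^ 2 + ρ * β ^ 2) * y + m - Real.log α) / (β * b))) ≤ 1 :=
        Finset.prod_le_one (fun i _ => (Psi_pos (hzz i) _).le) (fun i _ => Psi_le_one (hzz i) _)
      have h0 : (0:ℝ) ≤ ∏ i, Psi (zz i) ((Real.sqrt (σε ^ 2 + ρ * β ^ 2) * y + m - Real.log α) / (β * b)) :=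
        Finset.prod_nonneg fun i _ => (Psi_pos (hzz i) _).le
      nlinarith [hφ_pos y]
    · filter_upwards with y
      refine Tendsto.mul_const (φ y) ?_
      refine tendsto_finset_prod _ fun i _ => ?_
      refine ((continuous_Psi (zz i)).continuousAt.tendsto).comp ?_
      -- argument tendsto
      have harg : Tendsto (fun β : ℝ =>
          (Real.sqrt (σε ^ 2 + ρ * β ^ 2) * y + m - Real.log α) / (β * b)) atTop (𝓝 (c * y)) := by
        have hev : ∀ᶠ β : ℝ in atTop,
            (Real.sqrt (σε ^ 2 + ρ * β ^ 2) * y + m - Real.log α) / (β * b)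
            = Real.sqrt (σε ^ 2 / β ^ 2 + ρ) * (y / b) + ((m - Real.log α) / b) * β⁻¹ := by
          filter_upwards [eventually_gt_atTop (0:ℝ)] with β hβ
          have h1 : Real.sqrt (σε ^ 2 + ρ * β ^ 2) = Real.sqrt (σε ^ 2 / β ^ 2 + ρ) * β := by
            rw [← Real.sqrt_sq hβ.le, ← Real.sqrt_mul (by positivity)]
            rw [Real.sqrt_sq hβ.le]
            congr 1
            field_simp
          rw [h1]
          field_simp
          ring
        refine Tendsto.congr' (hev.mono fun _ h => h.symm) ?_
        have h2 : Tendsto (fun β : ℝ => Real.sqrt (σε ^ 2 / β ^ 2 + ρ)) atTop (𝓝 (Real.sqrt ρ)) := by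
          have h3 : Tendsto (fun β : ℝ => σε ^ 2 / β ^ 2 + ρ) atTop (𝓝 (0 + ρ)) := by
            refine Tendsto.add_const ρ ?_
            simp only [div_eq_mul_inv]
            simpa using ((tendsto_pow_atTop (two_ne_zero)).inv_tendsto_atTop).const_mul (σε ^ 2)
          rw [zero_add] at h3
          exact (Real.continuous_sqrt.continuousAt.tendsto).comp h3
        have h4 : Tendsto (fun β : ℝ => ((m - Real.log α) / b) * β⁻¹) atTop (𝓝 0) := by
          simpa using tendsto_inv_atTop_zero.const_mul ((m - Real.log α) / b)
        have := (h2.mul_const (y / b)).add h4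
        rw [add_zero] at this
        convert this using 2
        rw [hcdef]
        ring
      exact harg
  refine key.congr ?_
  intro β
  by_cases hβok : (0:ℝ) < σε ^ 2 + ρ * β ^ 2
  · exact (sub_lemma σε ρ (Real.log α) m β hβok (fun γ => ∏ i, Psi (zz i) γ)).symm
  · exact absurd (by positivity) hβok


set_option maxHeartbeats 1000000 in
/-- For fixed `α` and `ρ`, there is `C > 0` with `p((α,β,ρ)|z,â) ~ C/β` as `β → ∞`;
consequently `∫_1^∞ p((α,β,ρ)|z,â) dβ = +∞`, so the posterior is improper. -/
theorem stmt18 (J : ℕ) (I : Fin J → ℕ) (ahat : Fin J → ℝ) (hahat : ∀ j, 0 < ahat j)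
    (z : (j : Fin J) → Fin (I j) → ℕ) (hz : ∀ j i, z j i = 0 ∨ z j i = 1)
    (σε : ℝ) (hσε : 0 < σε) (μ σ : ℝ) (hσ : 0 < σ)
    (α : ℝ) (hα : 0 < α) (ρ : ℝ) (hρ : ρ ∈ Set.Ioo (0 : ℝ) 1) :
    (∃ C > (0 : ℝ), Filter.Tendsto
      (fun β : ℝ => postSK J I ahat z σε μ σ α β ρ / (C / β)) Filter.atTop (nhds 1)) ∧
    ∫⁻ β in Set.Ioi (1 : ℝ),
      ENNReal.ofReal (postSK J I ahat z σε μ σ α β ρ) = ⊤ := by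
  obtain ⟨hρ0, hρ1⟩ := hρ
  choose L hLpos hLtend using fun j : Fin J =>
    tendsto_Fj (I j) (z j) (hz j) σε hσε α ρ hρ0 hρ1 (Real.log (ahat j))
  have hlik : Tendsto (fun β : ℝ => likSK J I ahat z σε α β ρ) atTop (𝓝 (∏ j, L j)) := by
    unfold likSK
    exact tendsto_finset_prod _ fun j _ => hLtend j
  set E : ℝ := Real.exp (-(Real.log α - μ) ^ 2 / (2 * σ ^ 2)) with hEdef
  have hE : 0 < E := Real.exp_pos _
  set Lp : ℝ := ∏ j, L j with hLpdef
  have hLp : 0 < Lp := Finset.prod_pos fun j _ => hLpos j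
  set C : ℝ := Lp * (α⁻¹ * E) with hCdef
  have hC : 0 < C := by positivity
  have hratio : ∀ β : ℝ, 0 < β →
      postSK J I ahat z σε μ σ α β ρ / (C / β) = likSK J I ahat z σε α β ρ / Lp := by
    intro β hβ
    rw [postSK, piSK3, if_pos ⟨hρ0.le, hρ1.le⟩, hCdef]
    rw [← hEdef]
    field_simp
  have h1 : Tendsto (fun β : ℝ => likSK J I ahat z σε α β ρ / Lp) atTop (𝓝 (Lp / Lp)) :=
    hlik.div_const Lp
  rw [div_self hLp.ne'] at h1
  have hT : Tendsto (fun β : ℝ => postSK J I ahat z σε μ σ α β ρ / (C / β)) atTop (𝓝 1) := by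
    refine Tendsto.congr' ?_ h1
    filter_upwards [eventually_gt_atTop (0:ℝ)] with β hβ using (hratio β hβ).symm
  constructor
  · exact ⟨C, hC, hT⟩
  -- Part 2
  have hev : ∀ᶠ β : ℝ in atTop,
      1/2 ≤ postSK J I ahat z σε μ σ α β ρ / (C / β) :=
    hT.eventually (eventually_ge_nhds (by norm_num))
  obtain ⟨M, hM⟩ := eventually_atTop.mp (hev.and (eventually_gt_atTop (0:ℝ)))
  set M' : ℝ := max M 2 with hM'def
  have hM'2 : (2:ℝ) ≤ M' := le_max_right _ _
  have hsub : Set.Ioi M' ⊆ Set.Ioi (1:ℝ) := fun x hx => lt_of_lt_of_le (by linarith : (1:ℝ) < M') (le_of_lt hx)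
  have hlower : ∀ β ∈ Set.Ioi M', C/2 * β⁻¹ ≤ postSK J I ahat z σε μ σ α β ρ := by
    intro β hβ
    have hβM : M ≤ β := le_trans (le_max_left _ _) (le_of_lt hβ)
    obtain ⟨hhalf, hβ0⟩ := hM β hβM
    have hCβ : 0 < C / β := div_pos hC hβ0
    have h := (le_div_iff₀ hCβ).mp hhalf
    calc C/2 * β⁻¹ = 1/2 * (C/β) := by ring
      _ ≤ _ := h
  have h2 : (∫⁻ β in Set.Ioi M', ENNReal.ofReal (C/2 * β⁻¹)) = ⊤ := by
    by_contra h
    have hmeas : AEStronglyMeasurable (fun β : ℝ => C/2 * β⁻¹)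
        (volume.restrict (Set.Ioi M')) :=
      ((measurable_inv.const_mul (C/2)).aestronglyMeasurable)
    have hnn : 0 ≤ᵐ[volume.restrict (Set.Ioi M')] fun β : ℝ => C/2 * β⁻¹ := by
      filter_upwards [ae_restrict_mem measurableSet_Ioi] with β hβ
      have hβ0 : (0:ℝ) < β := lt_of_lt_of_le (by linarith) (le_of_lt hβ)
      positivity
    have hint := (lintegral_ofReal_ne_top_iff_integrable hmeas hnn).mp h
    have hint2 : IntegrableOn (fun β : ℝ => β⁻¹) (Set.Ioi M') := by
      have h3 := hint.const_mul (2/C)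
      refine h3.congr ?_
      filter_upwards [ae_restrict_mem measurableSet_Ioi] with β hβ
      have hβ0 : β ≠ 0 := by
        have : (0:ℝ) < β := lt_of_lt_of_le (by linarith) (le_of_lt hβ)
        exact this.ne'
      field_simp
    have hM'pos : (0:ℝ) < M' := by linarith
    have hint3 : IntegrableOn (fun x : ℝ => x ^ (-1:ℝ)) (Set.Ioi M') := by
      refine hint2.congr ?_
      filter_upwards [ae_restrict_mem measurableSet_Ioi] with x hx
      rw [Real.rpow_neg_one]
    rw [integrableOn_Ioi_rpow_iff hM'pos] at hint3
    norm_num at hint3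
  have hmono1 : (∫⁻ β in Set.Ioi M', ENNReal.ofReal (C/2 * β⁻¹)) ≤
      ∫⁻ β in Set.Ioi M', ENNReal.ofReal (postSK J I ahat z σε μ σ α β ρ) := by
    refine lintegral_mono_ae ?_
    filter_upwards [ae_restrict_mem measurableSet_Ioi] with β hβ
    exact ENNReal.ofReal_le_ofReal (hlower β hβ)
  have hmono2 : (∫⁻ β in Set.Ioi M', ENNReal.ofReal (postSK J I ahat z σε μ σ α β ρ)) ≤
      ∫⁻ β in Set.Ioi (1:ℝ), ENNReal.ofReal (postSK J I ahat z σε μ σ α β ρ) :=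
    lintegral_mono' (Measure.restrict_mono hsub le_rfl) le_rfl
  exact eq_top_iff.mpr (h2 ▸ (hmono1.trans hmono2))
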